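/- Let Σ be an infinite group, κ the cardinality of the set of ultrafilters on Σ, and K a pseudofield. Then every radical difference ideal 𝔱 of K{y₁,…,yₙ} can be written as 𝔱 = r([E]) for some subset E with |E| ≤ |Σ|·κ, where [E] is the difference ideal generated by E and r denotes the radical. -/

import Mathlib

open MvPolynomial

universe u v

variable {G : Type u} [Group G]

noncomputable def diffAct {A : Type v} [CommRing A] [MulSemiringAction G A] {n : ℕ} (σ : G) :
    MvPolynomial (G × Fin n) A →+* MvPolynomial (G × Fin n) A :=
  (MvPolynomial.rename (Prod.map (fun τ => σ * τ) id)).toRingHom.comp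
    (MvPolynomial.map (MulSemiringAction.toRingHom G A σ))

def IsDiffIdeal {A : Type v} [CommRing A] [MulSemiringAction G A] {n : ℕ}
    (I : Ideal (MvPolynomial (G × Fin n) A)) : Prop :=
  ∀ σ : G, ∀ f ∈ I, diffAct σ f ∈ I

def IsPerfectDiffIdeal {A : Type v} [CommRing A] [MulSemiringAction G A] {n : ℕ}
    (I : Ideal (MvPolynomial (G × Fin n) A)) : Prop :=
  IsDiffIdeal I ∧
    ∀ (f : MvPolynomial (G × Fin n) A) (m : ℕ) (σ : Fin m → G) (k : Fin m → ℕ),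
      (∀ i, 1 ≤ k i) → (∏ i, (diffAct (σ i) f) ^ k i) ∈ I → f ∈ I

def IsStableIdeal (G : Type u) [Group G] {R : Type v} [CommRing R] [MulSemiringAction G R] (I : Ideal R) : Prop :=
  ∀ σ : G, ∀ a ∈ I, σ • a ∈ I

def IsPerfectIdeal (G : Type u) [Group G] {R : Type v} [CommRing R] [MulSemiringAction G R] (I : Ideal R) : Prop :=
  IsStableIdeal G I ∧
    ∀ (a : R) (m : ℕ) (σ : Fin m → G) (k : Fin m → ℕ),
      (∀ i, 1 ≤ k i) → (∏ i, (σ i • a) ^ k i) ∈ I → a ∈ I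

def IsSimpleDiffRing (G : Type u) (R : Type v) [Group G] [CommRing R] [MulSemiringAction G R] : Prop :=
  Nontrivial R ∧ ∀ I : Ideal R, IsStableIdeal G I → I = ⊥ ∨ I = ⊤

def IsPseudofield (G : Type u) (R : Type v) [Group G] [CommRing R] [MulSemiringAction G R] : Prop :=
  IsSimpleDiffRing G R ∧ ∀ a : R, ∃ x : R, a * x * a = a

structure DiffRingExt (G : Type u) [Group G] : Type (max u (v + 1)) where
  carrier : Type v
  [ring : CommRing carrier]
  [act : MulSemiringAction G carrier]

attribute [instance] DiffRingExt.ring DiffRingExt.act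

/-- The smallest difference ideal containing `E`. -/
noncomputable def diffSpan {G A : Type u} [Group G] [CommRing A] [MulSemiringAction G A]
    {n : ℕ} (E : Set (MvPolynomial (G × Fin n) A)) : Ideal (MvPolynomial (G × Fin n) A) :=
  Ideal.span (⋃ σ : G, diffAct σ '' E)


set_option maxHeartbeats 1000000

section Aux

lemma fiber_gen {K : Type u} [CommRing K] {V : Type u}
    (hreg : ∀ a : K, ∃ x, a * x * a = a)
    (p : Ideal K) (hp : p.IsPrime) (𝔱 : Ideal (MvPolynomial V K)) (S : Finset V) :
    ∃ e : ℕ → MvPolynomial V K, (∀ i, e i ∈ 𝔱) ∧ ∀ f ∈ 𝔱, ↑f.vars ⊆ (S : Set V) →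
      MvPolynomial.map (Ideal.Quotient.mk p) f ∈
        Ideal.span ((MvPolynomial.map (Ideal.Quotient.mk p)) '' Set.range e) := by
  classical
  haveI := hp
  have hfield : IsField (K ⧸ p) := by
    haveI : Nontrivial (K ⧸ p) := Ideal.Quotient.nontrivial_iff.mpr hp.ne_top
    refine ⟨exists_pair_ne _, mul_comm, ?_⟩
    intro a ha
    obtain ⟨b, rfl⟩ := Ideal.Quotient.mk_surjective a
    obtain ⟨x, hx⟩ := hreg b
    have hb : b ∉ p := fun h => ha (Ideal.Quotient.eq_zero_iff_mem.2 h)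
    have h0 : (b * x - 1) * b ∈ p := by
      have e1 : (b * x - 1) * b = b * x * b - b := by ring
      rw [e1, hx, sub_self]; exact p.zero_mem
    have h1 : b * x - 1 ∈ p := (hp.mem_or_mem h0).resolve_right hb
    refine ⟨Ideal.Quotient.mk p x, ?_⟩
    rw [← map_mul, ← sub_eq_zero, ← map_one (Ideal.Quotient.mk p), ← map_sub]
    exact Ideal.Quotient.eq_zero_iff_mem.2 h1
  haveI : p.IsMaximal := (Ideal.Quotient.maximal_ideal_iff_isField_quotient p).2 hfield
  letI : Field (K ⧸ p) := Ideal.Quotient.field p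
  have h0T : (0 : MvPolynomial ↥(↑S : Set V) (K ⧸ p)) ∈
      {g | ∃ f ∈ 𝔱, MvPolynomial.map (Ideal.Quotient.mk p) f
        = rename (Subtype.val : ↥(↑S : Set V) → V) g} :=
    ⟨0, 𝔱.zero_mem, by simp⟩
  obtain ⟨Γ, hΓ⟩ := IsNoetherian.noetherian (Ideal.span
    {g | ∃ f ∈ 𝔱, MvPolynomial.map (Ideal.Quotient.mk p) f
      = rename (Subtype.val : ↥(↑S : Set V) → V) g})
  have hmem : ∀ γ ∈ Γ, ∃ t : Finset (MvPolynomial ↥(↑S : Set V) (K ⧸ p)),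
      ↑t ⊆ {g | ∃ f ∈ 𝔱, MvPolynomial.map (Ideal.Quotient.mk p) f
        = rename (Subtype.val : ↥(↑S : Set V) → V) g} ∧ γ ∈ Ideal.span (↑t : Set _) := by
    intro γ hγ
    have : γ ∈ Ideal.span {g | ∃ f ∈ 𝔱, MvPolynomial.map (Ideal.Quotient.mk p) f
        = rename (Subtype.val : ↥(↑S : Set V) → V) g} := by
      rw [← hΓ]; exact Ideal.subset_span hγ
    exact Submodule.mem_span_finite_of_mem_span this
  choose t ht1 ht2 using hmem
  obtain ⟨T₀, hT₀T, hspan⟩ : ∃ T₀ : Finset (MvPolynomial ↥(↑S : Set V) (K ⧸ p)),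
      ↑T₀ ⊆ {g | ∃ f ∈ 𝔱, MvPolynomial.map (Ideal.Quotient.mk p) f
        = rename (Subtype.val : ↥(↑S : Set V) → V) g} ∧
      Ideal.span {g | ∃ f ∈ 𝔱, MvPolynomial.map (Ideal.Quotient.mk p) f
        = rename (Subtype.val : ↥(↑S : Set V) → V) g} = Ideal.span (↑T₀ : Set _) := by
    have hsub : ↑(Γ.attach.biUnion (fun γ => t γ.1 γ.2)) ⊆
        {g | ∃ f ∈ 𝔱, MvPolynomial.map (Ideal.Quotient.mk p) f
          = rename (Subtype.val : ↥(↑S : Set V) → V) g} := by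
      intro g hg
      simp only [Finset.coe_biUnion, Finset.mem_coe, Finset.mem_attach, Set.iUnion_true,
        Set.mem_iUnion] at hg
      obtain ⟨γ, hγ⟩ := hg
      exact ht1 γ.1 γ.2 hγ
    refine ⟨Γ.attach.biUnion (fun γ => t γ.1 γ.2), hsub, le_antisymm ?_ (Ideal.span_mono hsub)⟩
    rw [← hΓ]
    refine Submodule.span_le.2 ?_
    intro γ hγ
    refine Ideal.span_mono ?_ (ht2 γ (Finset.mem_coe.1 hγ))
    intro g hg
    simp only [Finset.coe_biUnion, Finset.mem_coe, Finset.mem_attach, Set.iUnion_true,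
      Set.mem_iUnion]
    exact ⟨⟨γ, Finset.mem_coe.1 hγ⟩, hg⟩
  -- enumerate insert 0 T₀
  obtain ⟨τ, hτ⟩ := ((T₀.finite_toSet.insert 0).countable).exists_eq_range
    ⟨0, Set.mem_insert _ _⟩
  have hτT : ∀ i, ∃ f, f ∈ 𝔱 ∧ MvPolynomial.map (Ideal.Quotient.mk p) f
      = rename (Subtype.val : ↥(↑S : Set V) → V) (τ i) := by
    intro i
    have hi : τ i ∈ (insert (0 : MvPolynomial ↥(↑S : Set V) (K ⧸ p)) (↑T₀ : Set _) : Set _) := by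
      rw [hτ]; exact Set.mem_range_self i
    rcases Set.mem_insert_iff.1 hi with h | h
    · obtain ⟨f, hf1, hf2⟩ := h0T
      exact ⟨f, hf1, by rw [h]; exact hf2⟩
    · obtain ⟨f, hf1, hf2⟩ := hT₀T h
      exact ⟨f, hf1, hf2⟩
  choose e he1 he2 using hτT
  refine ⟨e, he1, ?_⟩
  intro f hf hvars
  have hπf : MvPolynomial.map (Ideal.Quotient.mk p) f ∈ supported (K ⧸ p) (↑S : Set V) := by
    refine mem_supported.2 (Set.Subset.trans ?_ hvars)
    intro v hv
    rw [Finset.mem_coe] at hv ⊢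
    exact vars_map _ _ hv
  rw [supported_eq_range_rename] at hπf
  obtain ⟨g, hg⟩ := hπf
  have hgspan : g ∈ Ideal.span (↑T₀ : Set _) := by
    rw [← hspan]
    exact Ideal.subset_span ⟨f, hf, hg.symm⟩
  have hmap : rename (Subtype.val : ↥(↑S : Set V) → V) g ∈
      Ideal.span ((rename (Subtype.val : ↥(↑S : Set V) → V)).toRingHom '' ↑T₀) := by
    rw [← Ideal.map_span]
    exact Ideal.mem_map_of_mem _ hgspan
  have himg : (rename (Subtype.val : ↥(↑S : Set V) → V)).toRingHom '' ↑T₀ ⊆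
      ⇑(MvPolynomial.map (Ideal.Quotient.mk p) :
        MvPolynomial V K →+* MvPolynomial V (K ⧸ p)) '' Set.range e := by
    rintro y ⟨g', hg', rfl⟩
    have : g' ∈ Set.range τ := by
      rw [← hτ]; exact Set.mem_insert_of_mem _ hg'
    obtain ⟨i, rfl⟩ := this
    exact ⟨e i, ⟨i, rfl⟩, he2 i⟩
  rw [← hg]
  exact Ideal.span_mono himg hmap

lemma key_gen {K : Type u} [CommRing K] {V : Type u}
    (hreg : ∀ a : K, ∃ x, a * x * a = a)
    (𝔱 : Ideal (MvPolynomial V K)) (h2 : 𝔱.IsRadical) :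
    ∃ F : PrimeSpectrum K × Finset V × ℕ → MvPolynomial V K,
      (∀ j, F j ∈ 𝔱) ∧ 𝔱 = (Ideal.span (Set.range F)).radical := by
  classical
  have hch : ∀ (q : PrimeSpectrum K) (S : Finset V),
      ∃ e : ℕ → MvPolynomial V K, (∀ i, e i ∈ 𝔱) ∧ ∀ f ∈ 𝔱, ↑f.vars ⊆ (S : Set V) →
        MvPolynomial.map (Ideal.Quotient.mk q.asIdeal) f ∈
          Ideal.span ((MvPolynomial.map (Ideal.Quotient.mk q.asIdeal)) '' Set.range e) :=
    fun q S => fiber_gen hreg q.asIdeal q.isPrime 𝔱 S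
  choose e he1 he2 using hch
  refine ⟨fun j => e j.1 j.2.1 j.2.2, fun j => he1 j.1 j.2.1 j.2.2, ?_⟩
  apply le_antisymm
  · -- 𝔱 ≤ radical
    intro f hf
    rw [Ideal.radical_eq_sInf]
    refine Ideal.mem_sInf.2 ?_
    rintro Q ⟨hQle, hQprime⟩
    haveI := hQprime
    set p : Ideal K := Q.comap (C : K →+* MvPolynomial V K) with hp
    haveI : p.IsPrime := Ideal.IsPrime.comap _
    have hmem := he2 ⟨p, inferInstance⟩ f.vars f hf (by rfl)
    -- push into span of the full family
    have hsub : (MvPolynomial.map (Ideal.Quotient.mk p)) '' Set.range (e ⟨p, inferInstance⟩ f.vars)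
        ⊆ (MvPolynomial.map (Ideal.Quotient.mk p)) ''
          Set.range (fun j : PrimeSpectrum K × Finset V × ℕ => e j.1 j.2.1 j.2.2) := by
      apply Set.image_mono
      rintro y ⟨i, rfl⟩
      exact ⟨(⟨p, inferInstance⟩, f.vars, i), rfl⟩
    have hmem2 : MvPolynomial.map (Ideal.Quotient.mk p) f ∈
        Ideal.map (MvPolynomial.map (Ideal.Quotient.mk p) :
            MvPolynomial V K →+* MvPolynomial V (K ⧸ p))
          (Ideal.span (Set.range (fun j : PrimeSpectrum K × Finset V × ℕ => e j.1 j.2.1 j.2.2))) := by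
      rw [Ideal.map_span]
      exact Ideal.span_mono hsub hmem
    have hsurj : Function.Surjective
        (MvPolynomial.map (Ideal.Quotient.mk p) :
          MvPolynomial V K →+* MvPolynomial V (K ⧸ p)) :=
      MvPolynomial.map_surjective _ Ideal.Quotient.mk_surjective
    have hcm := Ideal.comap_map_of_surjective _ hsurj
      (Ideal.span (Set.range (fun j : PrimeSpectrum K × Finset V × ℕ => e j.1 j.2.1 j.2.2)))
    have hfmem : f ∈ Ideal.span (Set.range (fun j : PrimeSpectrum K × Finset V × ℕ =>
        e j.1 j.2.1 j.2.2)) ⊔ Ideal.comap (MvPolynomial.map (Ideal.Quotient.mk p) :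
          MvPolynomial V K →+* MvPolynomial V (K ⧸ p)) ⊥ := by
      rw [← hcm]
      exact hmem2
    refine (sup_le hQle ?_) hfmem
    -- the kernel is contained in Q
    intro h hh
    have : h ∈ RingHom.ker (MvPolynomial.map (Ideal.Quotient.mk p) :
        MvPolynomial V K →+* MvPolynomial V (K ⧸ p)) := hh
    rw [MvPolynomial.ker_map, Ideal.mk_ker] at this
    have := MvPolynomial.mem_map_C_iff.1 this
    rw [as_sum h]
    refine Ideal.sum_mem _ ?_
    intro m _
    rw [← mul_one (h.coeff m), ← C_mul_monomial]
    exact Q.mul_mem_right _ (this m)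
  · -- radical ≤ 𝔱
    have : Ideal.span (Set.range (fun j : PrimeSpectrum K × Finset V × ℕ =>
        e j.1 j.2.1 j.2.2)) ≤ 𝔱 := by
      rw [Ideal.span_le]
      rintro x ⟨j, rfl⟩
      exact he1 j.1 j.2.1 j.2.2
    calc (Ideal.span _).radical ≤ 𝔱.radical := Ideal.radical_mono this
    _ = 𝔱 := h2.radical


/-- The ultrafilter limit of the translates of an ideal. -/
def limitIdeal {G : Type u} [Group G] {K : Type v} [CommRing K] [MulSemiringAction G K]
    (p : Ideal K) (u : Ultrafilter G) : Ideal K where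
  carrier := {a | {σ : G | σ • a ∈ p} ∈ u}
  add_mem' {a b} ha hb := by
    refine Filter.mem_of_superset (Filter.inter_mem ha hb) ?_
    rintro σ ⟨h1, h2⟩
    show σ • (a + b) ∈ p
    rw [smul_add]
    exact p.add_mem h1 h2
  zero_mem' := by
    have : {σ : G | σ • (0 : K) ∈ p} = Set.univ := by
      ext σ; simp [smul_zero, p.zero_mem]
    show {σ : G | σ • (0 : K) ∈ p} ∈ u
    rw [this]; exact Filter.univ_mem
  smul_mem' c a ha := by
    refine Filter.mem_of_superset ha ?_
    intro σ h
    show σ • (c • a) ∈ p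
    rw [smul_eq_mul, smul_mul']
    exact p.mul_mem_left _ h

lemma mem_limitIdeal_iff {G : Type u} [Group G] {K : Type v} [CommRing K] [MulSemiringAction G K]
    (p : Ideal K) (u : Ultrafilter G) (a : K) :
    a ∈ limitIdeal p u ↔ {σ : G | σ • a ∈ p} ∈ u := Iff.rfl

lemma limitIdeal_isPrime {G : Type u} [Group G] {K : Type v} [CommRing K] [MulSemiringAction G K]
    (p : Ideal K) (hp : p.IsPrime) (u : Ultrafilter G) : (limitIdeal p u).IsPrime := by
  constructor
  · intro h
    have h1 : (1 : K) ∈ limitIdeal p u := h ▸ Submodule.mem_top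
    rw [mem_limitIdeal_iff] at h1
    have : {σ : G | σ • (1 : K) ∈ p} = ∅ := by
      ext σ; simp [smul_one, (Ideal.ne_top_iff_one p).1 hp.ne_top]
    rw [this] at h1
    exact Filter.empty_notMem (↑u : Filter G) h1
  · intro a b hab
    rw [mem_limitIdeal_iff] at hab
    have : {σ : G | σ • (a * b) ∈ p} = {σ : G | σ • a ∈ p} ∪ {σ : G | σ • b ∈ p} := by
      ext σ
      simp only [Set.mem_setOf_eq, Set.mem_union, smul_mul']
      exact ⟨fun h => hp.mem_or_mem h, fun h => h.elim (p.mul_mem_right _) (p.mul_mem_left _)⟩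
    rw [this, Ultrafilter.union_mem_iff] at hab
    exact hab

lemma spec_card_le {G K : Type u} [Group G] [CommRing K] [MulSemiringAction G K]
    (hsimple : Nontrivial K ∧ ∀ I : Ideal K, IsStableIdeal G I → I = ⊥ ∨ I = ⊤)
    (hreg : ∀ a : K, ∃ x : K, a * x * a = a) :
    Cardinal.mk (PrimeSpectrum K) ≤ Cardinal.mk (Ultrafilter G) := by
  classical
  haveI : Nontrivial K := hsimple.1
  obtain ⟨p, hpmax⟩ := Ideal.exists_maximal K
  have hp : p.IsPrime := hpmax.isPrime
  -- key auxiliary facts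
  have idem : ∀ a : K, ∃ e : K, e * e = e ∧ e * a = a ∧ ∃ x, e = a * x := by
    intro a
    obtain ⟨x, hx⟩ := hreg a
    refine ⟨a * x, ?_, ?_, x, rfl⟩
    · have h : a * x * (a * x) = a * x * a * x := by ring
      rw [h, hx]
    · exact hx
  have hne : ∀ e : K, e * e = e → e ≠ 1 → ∃ σ : G, σ • e ∈ p := by
    intro e hee he1
    by_contra hc
    push_neg at hc
    set I : Ideal K :=
      { carrier := {a | ∀ σ : G, σ • a ∈ p}
        add_mem' := fun {a b} ha hb σ => by
          rw [smul_add]; exact p.add_mem (ha σ) (hb σ)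
        zero_mem' := fun σ => by rw [smul_zero]; exact p.zero_mem
        smul_mem' := fun c a ha σ => by
          rw [smul_eq_mul, smul_mul']; exact p.mul_mem_left _ (ha σ) } with hI
    have hstable : IsStableIdeal G I := by
      intro τ a ha σ
      show σ • (τ • a) ∈ p
      rw [smul_smul]
      exact ha (σ * τ)
    have hIne : I ≠ ⊤ := by
      intro h
      have h1 : (1 : K) ∈ I := h ▸ Submodule.mem_top
      have := h1 1
      rw [smul_one] at this
      exact (Ideal.ne_top_iff_one p).1 hp.ne_top this
    have hIbot : I = ⊥ := (hsimple.2 I hstable).resolve_right hIne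
    have hmem : (1 - e) ∈ I := by
      intro σ
      have h0 : σ • ((1 - e) * e) ∈ p := by
        have : (1 - e) * e = e - e * e := by ring
        rw [this, hee, sub_self, smul_zero]
        exact p.zero_mem
      rw [smul_mul'] at h0
      exact (hp.mem_or_mem h0).resolve_right (hc σ)
    rw [hIbot] at hmem
    have : (1 : K) - e = 0 := hmem
    apply he1
    have h2 : (1 : K) = e := by
      rw [← sub_eq_zero]; exact this
    exact h2.symm
  -- A a ⊆ A e for e the idempotent of a, and membership transfer
  have hAsub : ∀ a e : K, e * a = a → ∀ σ : G, σ • e ∈ p → σ • a ∈ p := by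
    intro a e hea σ h
    have : σ • a = σ • e * σ • a := by rw [← smul_mul', hea]
    rw [this]
    exact p.mul_mem_right _ h
  -- given a prime q, find an ultrafilter u with limitIdeal p u = q
  have hsurj : ∀ qq : PrimeSpectrum K, ∃ u : Ultrafilter G, limitIdeal p u = qq.asIdeal := by
    rintro ⟨q, hq⟩
    -- combine two elements of q
    have hcomb : ∀ a b : K, a ∈ q → b ∈ q → ∃ c ∈ q,
        {σ : G | σ • c ∈ p} ⊆ {σ : G | σ • a ∈ p} ∩ {σ : G | σ • b ∈ p} := by
      intro a b ha hb
      obtain ⟨ea, heea, heaa, xa, hexa⟩ := idem a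
      obtain ⟨eb, heeb, hebb, xb, hexb⟩ := idem b
      have heaq : ea ∈ q := by rw [hexa]; exact q.mul_mem_right _ ha
      have hebq : eb ∈ q := by rw [hexb]; exact q.mul_mem_right _ hb
      refine ⟨ea + eb - ea * eb, ?_, ?_⟩
      · exact q.sub_mem (q.add_mem heaq hebq) (q.mul_mem_right _ heaq)
      · intro σ hσ
        simp only [Set.mem_setOf_eq] at hσ ⊢
        constructor
        · refine hAsub a ea heaa σ ?_
          have h1 : ea * (ea + eb - ea * eb) = ea := by
            have : ea * (ea + eb - ea * eb) = ea * ea + ea * eb - ea * (ea * eb) := by ring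
            rw [this, heea]
            have : ea * (ea * eb) = (ea * ea) * eb := by ring
            rw [this, heea]; ring
          have : σ • ea = σ • ea * σ • (ea + eb - ea * eb) := by rw [← smul_mul', h1]
          rw [this]
          exact p.mul_mem_left _ hσ
        · refine hAsub b eb hebb σ ?_
          have h1 : eb * (ea + eb - ea * eb) = eb := by
            have : eb * (ea + eb - ea * eb) = eb * ea + eb * eb - (eb * eb) * ea := by ring
            rw [this, heeb]; ring
          have : σ • eb = σ • eb * σ • (ea + eb - ea * eb) := by rw [← smul_mul', h1]
          rw [this]
          exact p.mul_mem_left _ hσ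
    -- each basic set is nonempty
    have hAne : ∀ a : K, a ∈ q → {σ : G | σ • a ∈ p}.Nonempty := by
      intro a ha
      obtain ⟨e, hee, hea, x, hex⟩ := idem a
      have heq : e ∈ q := by rw [hex]; exact q.mul_mem_right _ ha
      have he1 : e ≠ 1 := by
        intro h
        exact (Ideal.ne_top_iff_one q).1 hq.ne_top (h ▸ heq)
      obtain ⟨σ, hσ⟩ := hne e hee he1
      exact ⟨σ, hAsub a e hea σ hσ⟩
    -- finite intersection property (strengthened)
    have hstrong : ∀ t : Set (Set G), t.Finite →
        t ⊆ (fun a : K => {σ : G | σ • a ∈ p}) '' {a | a ∈ q} →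
        ∃ a, a ∈ q ∧ {σ : G | σ • a ∈ p} ⊆ ⋂₀ t := by
      intro t ht
      refine Set.Finite.induction_on
        (motive := fun t _ => t ⊆ (fun a : K => {σ : G | σ • a ∈ p}) '' {a | a ∈ q} →
          ∃ a, a ∈ q ∧ {σ : G | σ • a ∈ p} ⊆ ⋂₀ t) t ht ?_ ?_
      · intro _
        exact ⟨0, q.zero_mem, by rw [Set.sInter_empty]; exact Set.subset_univ _⟩
      · intro s t' _ _ IH hsub
        obtain ⟨b, hbq, hbs⟩ := hsub (Set.mem_insert _ _)
        obtain ⟨a, haq, haI⟩ := IH (fun x hx => hsub (Set.mem_insert_of_mem _ hx))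
        obtain ⟨c, hcq, hcsub⟩ := hcomb b a hbq haq
        refine ⟨c, hcq, ?_⟩
        rw [Set.sInter_insert]
        intro σ hσ
        obtain ⟨h1, h2⟩ := hcsub hσ
        exact ⟨hbs ▸ h1, haI h2⟩
    -- build the ultrafilter
    haveI hNB : (Filter.generate ((fun a : K => {σ : G | σ • a ∈ p}) '' {a | a ∈ q})).NeBot := by
      rw [Filter.generate_neBot_iff]
      intro t hts htfin
      obtain ⟨a, haq, hasub⟩ := hstrong t htfin hts
      exact (hAne a haq).mono hasub
    obtain ⟨u, hu⟩ := Ultrafilter.exists_le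
      (Filter.generate ((fun a : K => {σ : G | σ • a ∈ p}) '' {a | a ∈ q}))
    have hqle : ∀ a ∈ q, a ∈ limitIdeal p u := by
      intro a ha
      rw [mem_limitIdeal_iff]
      exact hu (Filter.mem_generate_of_mem ⟨a, ha, rfl⟩)
    refine ⟨u, le_antisymm ?_ hqle⟩
    intro b hb
    by_contra hbq
    obtain ⟨e, hee, heb, x, hex⟩ := idem b
    have heq : e ∉ q := by
      intro h
      exact hbq (by rw [← heb]; exact q.mul_mem_right _ h)
    have h1e : (1 : K) - e ∈ q := by
      have h0 : (1 - e) * e ∈ q := by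
        have : (1 - e) * e = e - e * e := by ring
        rw [this, hee, sub_self]; exact q.zero_mem
      exact (hq.mem_or_mem h0).resolve_right heq
    have h1elim : (1 : K) - e ∈ limitIdeal p u := hqle _ h1e
    have heLim : e ∈ limitIdeal p u := by
      rw [hex]; exact (limitIdeal p u).mul_mem_right _ hb
    have hone : (1 : K) ∈ limitIdeal p u := by
      have := (limitIdeal p u).add_mem heLim h1elim
      rwa [add_sub_cancel] at this
    exact (limitIdeal_isPrime p hp u).ne_top ((Ideal.eq_top_iff_one _).2 hone)
  -- conclude
  have : Function.Surjective (fun u : Ultrafilter G =>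
      (⟨limitIdeal p u, limitIdeal_isPrime p hp u⟩ : PrimeSpectrum K)) := by
    intro qq
    obtain ⟨u, hu⟩ := hsurj qq
    exact ⟨u, PrimeSpectrum.ext hu⟩
  exact Cardinal.mk_le_of_surjective this


lemma diffAct_one {A : Type v} [CommRing A] [MulSemiringAction G A] {n : ℕ}
    (f : MvPolynomial (G × Fin n) A) : diffAct (1 : G) f = f := by
  have h1 : MulSemiringAction.toRingHom G A 1 = RingHom.id A :=
    RingHom.ext fun a => one_smul G a
  have h2 : (Prod.map (fun τ : G => 1 * τ) (id : Fin n → Fin n)) = id := by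
    funext x
    cases x with
    | mk a b => simp [Prod.map]
  show (MvPolynomial.rename (Prod.map (fun τ : G => 1 * τ) id)).toRingHom
      ((MvPolynomial.map (MulSemiringAction.toRingHom G A 1)) f) = f
  rw [h1, h2, MvPolynomial.map_id]
  show MvPolynomial.rename id f = f
  exact MvPolynomial.rename_id_apply f

end Aux

/-- For an infinite group `G` with `κ` ultrafilters and a pseudofield `K`, every
radical difference ideal of `K{y₁,…,yₙ}` is the radical of a difference ideal
generated by at most `|G|·κ` elements. -/
theorem stmt19 {G K : Type u} [Group G] [Infinite G] [CommRing K] [MulSemiringAction G K]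
    (hK : IsPseudofield G K) (n : ℕ)
    (𝔱 : Ideal (MvPolynomial (G × Fin n) K)) (h1 : IsDiffIdeal 𝔱) (h2 : 𝔱.IsRadical) :
    ∃ E : Set (MvPolynomial (G × Fin n) K),
      Cardinal.mk E ≤ Cardinal.mk G * Cardinal.mk (Ultrafilter G) ∧
      𝔱 = (diffSpan E).radical := by
  classical
  obtain ⟨F, hF1, hF2⟩ := key_gen hK.2 𝔱 h2
  have hspec : Cardinal.mk (PrimeSpectrum K) ≤ Cardinal.mk (Ultrafilter G) :=
    spec_card_le hK.1 hK.2
  have hfin : Cardinal.mk (Finset (G × Fin n)) ≤ Cardinal.mk G := by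
    have l1 : Cardinal.mk (Finset (G × Fin n)) ≤ Cardinal.mk (Multiset (G × Fin n)) :=
      Cardinal.mk_le_of_injective Finset.val_injective
    have l2 : Cardinal.mk (Multiset (G × Fin n)) ≤ Cardinal.mk (List (G × Fin n)) :=
      Cardinal.mk_quotient_le
    have l3 := Cardinal.mk_list_le_max (G × Fin n)
    have l4 : Cardinal.mk (G × Fin n) ≤ Cardinal.mk G := by
      have hprod : Cardinal.mk (G × Fin n) =
          Cardinal.mk G * (n : Cardinal) := by
        simp [Cardinal.mk_prod, Cardinal.lift_uzero, Cardinal.mk_fin, Cardinal.lift_natCast]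
      rw [hprod]
      calc Cardinal.mk G * (n : Cardinal) ≤ Cardinal.mk G * Cardinal.aleph0 :=
            mul_le_mul_right (Cardinal.nat_lt_aleph0 n).le _
        _ ≤ Cardinal.mk G * Cardinal.mk G :=
            mul_le_mul_right (Cardinal.aleph0_le_mk G) _
        _ = Cardinal.mk G := Cardinal.mul_eq_self (Cardinal.aleph0_le_mk G)
    calc Cardinal.mk (Finset (G × Fin n)) ≤ Cardinal.mk (List (G × Fin n)) := l1.trans l2
      _ ≤ max Cardinal.aleph0 (Cardinal.mk (G × Fin n)) := l3
      _ ≤ max Cardinal.aleph0 (Cardinal.mk G) := max_le_max le_rfl l4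
      _ = Cardinal.mk G := max_eq_right (Cardinal.aleph0_le_mk G)
  refine ⟨Set.range F, ?_, ?_⟩
  · calc Cardinal.mk ↥(Set.range F)
        ≤ Cardinal.mk (PrimeSpectrum K × Finset (G × Fin n) × ℕ) := Cardinal.mk_range_le
      _ = Cardinal.mk (PrimeSpectrum K) * (Cardinal.mk (Finset (G × Fin n)) * Cardinal.aleph0) := by
          simp [Cardinal.mk_prod, Cardinal.lift_id, Cardinal.mk_nat, Cardinal.lift_aleph0,
            Cardinal.lift_uzero]
      _ ≤ Cardinal.mk (Ultrafilter G) * (Cardinal.mk G * Cardinal.mk G) :=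
          mul_le_mul' hspec (mul_le_mul' hfin (Cardinal.aleph0_le_mk G))
      _ = Cardinal.mk (Ultrafilter G) * Cardinal.mk G := by
          rw [Cardinal.mul_eq_self (Cardinal.aleph0_le_mk G)]
      _ = Cardinal.mk G * Cardinal.mk (Ultrafilter G) := mul_comm _ _
  · have hsub1 : Ideal.span (Set.range F) ≤ diffSpan (Set.range F) := by
      apply Ideal.span_mono
      intro x hx
      exact Set.mem_iUnion.2 ⟨1, ⟨x, hx, diffAct_one x⟩⟩
    have hsub2 : diffSpan (Set.range F) ≤ 𝔱 := by
      rw [diffSpan, Ideal.span_le]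
      intro y hy
      obtain ⟨σ, hy⟩ := Set.mem_iUnion.1 hy
      obtain ⟨x, hx, rfl⟩ := hy
      obtain ⟨j, rfl⟩ := hx
      exact h1 σ _ (hF1 j)
    apply le_antisymm
    · rw [hF2]
      exact Ideal.radical_mono hsub1
    · calc (diffSpan (Set.range F)).radical ≤ 𝔱.radical := Ideal.radical_mono hsub2
        _ = 𝔱 := h2.radical
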